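/- arXiv:0707.0667 — 2 statements merged into one kernel-verified Lean document; each statement's English description precedes it below -/
import Mathlib

section
/- For every positive integer λ and every n ≥ 0, the Szegő representation holds in truncated form: C_n^{(λ)}(cos θ) · (sin θ)^{2λ-1} = c_n^{(λ)} Σ_{ν=0}^{λ-1} α_{ν,n}^{(λ)} sin((n+2ν+1)θ), where c_n^{(λ)} = 2^{2-2λ} Γ(n+2λ)/(Γ(λ) Γ(n+λ+1)) and α_{ν,n}^{(λ)} = (1-λ)_ν (n+1)_ν / (ν! (n+λ+1)_ν). -/
open Finset

/-- Pochhammer symbol (rising factorial) for a real argument. -/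
noncomputable def poch (a : ℝ) (k : ℕ) : ℝ := ∏ i ∈ Finset.range k, (a + i)

/-- Gegenbauer (ultraspherical) polynomial `C_n^{(λ)}(x)`, via its standard
explicit expansion. -/
noncomputable def gegen (lam : ℝ) (n : ℕ) (x : ℝ) : ℝ :=
  ∑ k ∈ Finset.range (n / 2 + 1),
    (-1 : ℝ) ^ k * poch lam (n - k) /
      ((Nat.factorial k : ℝ) * (Nat.factorial (n - 2 * k) : ℝ)) * (2 * x) ^ (n - 2 * k)
lemma poch_zero (a : ℝ) : poch a 0 = 1 := by simp [poch]

lemma poch_succ (a : ℝ) (k : ℕ) : poch a (k+1) = poch a k * (a + k) := by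
  simp [poch, Finset.prod_range_succ]

lemma poch_shift (a : ℝ) (k : ℕ) : a * poch (a+1) k = poch a k * (a + k) := by
  induction k with
  | zero => simp [poch_zero]
  | succ k ih =>
    rw [poch_succ, poch_succ]
    push_cast
    rw [mul_comm (poch (a+1) k) (a+1+(k:ℝ)), ← mul_assoc, mul_comm a (a+1+(k:ℝ)), mul_assoc, ih]
    ring

lemma poch_pos {a : ℝ} (ha : 0 < a) (k : ℕ) : 0 < poch a k := by
  apply Finset.prod_pos
  intro i _
  positivity

lemma poch_neg_zero (m : ℕ) : poch (-(m:ℝ)) (m+1) = 0 := by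
  apply Finset.prod_eq_zero (Finset.self_mem_range_succ m)
  simp


noncomputable def Aco (lam n ν : ℕ) : ℝ :=
  (2 : ℝ) ^ ((2 : ℤ) - 2 * lam) * Real.Gamma (n + 2 * lam) /
      (Real.Gamma lam * Real.Gamma (n + lam + 1)) *
    (poch (1 - lam) ν * poch (n + 1) ν /
      ((Nat.factorial ν : ℝ) * poch (n + lam + 1) ν))

lemma R1 (lam n ν : ℕ) (hlam : 1 ≤ lam) :
    Aco lam (n+1) ν * (((n:ℝ)+1) * ((n:ℝ)+lam+1+ν)) =
      Aco lam n ν * (((n:ℝ)+2*lam) * ((n:ℝ)+1+ν)) := by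
  have hlamR : (1:ℝ) ≤ (lam:ℝ) := by exact_mod_cast hlam
  have h1 : (0:ℝ) < (n:ℝ) + 2*lam := by nlinarith [Nat.cast_nonneg (α := ℝ) n]
  have h2 : (0:ℝ) < (n:ℝ) + lam + 1 := by nlinarith [Nat.cast_nonneg (α := ℝ) n]
  have h3 : (0:ℝ) < (n:ℝ) + 1 := by positivity
  have hg1 : Real.Gamma (((n+1:ℕ):ℝ) + 2*lam) = ((n:ℝ)+2*lam) * Real.Gamma ((n:ℝ)+2*lam) := by
    rw [show ((n+1:ℕ):ℝ) + 2*lam = ((n:ℝ) + 2*lam) + 1 by push_cast; ring,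
      Real.Gamma_add_one (ne_of_gt h1)]
  have hg2 : Real.Gamma (((n+1:ℕ):ℝ) + lam + 1) = ((n:ℝ)+lam+1) * Real.Gamma ((n:ℝ)+lam+1) := by
    rw [show ((n+1:ℕ):ℝ) + lam + 1 = ((n:ℝ) + lam + 1) + 1 by push_cast; ring,
      Real.Gamma_add_one (ne_of_gt h2)]
  have hp1 : poch (((n+1:ℕ):ℝ)+1) ν = poch ((n:ℝ)+1) ν * ((n:ℝ)+1+ν) / ((n:ℝ)+1) := by
    rw [show ((n+1:ℕ):ℝ)+1 = ((n:ℝ)+1)+1 by push_cast; ring]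
    rw [eq_div_iff (ne_of_gt h3), mul_comm (poch ((n:ℝ)+1+1) ν) ((n:ℝ)+1), poch_shift]
  have hp2 : poch (((n+1:ℕ):ℝ)+lam+1) ν = poch ((n:ℝ)+lam+1) ν * ((n:ℝ)+lam+1+ν) / ((n:ℝ)+lam+1) := by
    rw [show ((n+1:ℕ):ℝ)+lam+1 = ((n:ℝ)+lam+1)+1 by push_cast; ring]
    rw [eq_div_iff (ne_of_gt h2), mul_comm _ ((n:ℝ)+lam+1), poch_shift]
  have hGl : Real.Gamma (lam:ℝ) ≠ 0 := ne_of_gt (Real.Gamma_pos_of_pos (by linarith))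
  have hG2 : Real.Gamma ((n:ℝ)+lam+1) ≠ 0 := ne_of_gt (Real.Gamma_pos_of_pos h2)
  have hQ1 : poch ((n:ℝ)+lam+1) ν ≠ 0 := ne_of_gt (poch_pos h2 ν)
  have hQ2 : poch ((n:ℝ)+lam+1+ν) ν ≠ 0 := ne_of_gt (poch_pos (by positivity) ν)
  have hfac : ((Nat.factorial ν : ℝ)) ≠ 0 := by exact_mod_cast (Nat.factorial_ne_zero ν)
  unfold Aco
  rw [hg1, hg2, hp1, hp2]
  field_simp

lemma R2 (lam n ν : ℕ) (hlam : 1 ≤ lam) :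
    Aco lam n (ν+1) * (((ν:ℝ)+1) * ((n:ℝ)+lam+1+ν)) =
      Aco lam n ν * ((1-(lam:ℝ)+ν) * ((n:ℝ)+1+ν)) := by
  have hlamR : (1:ℝ) ≤ (lam:ℝ) := by exact_mod_cast hlam
  have h2 : (0:ℝ) < (n:ℝ) + lam + 1 := by nlinarith [Nat.cast_nonneg (α := ℝ) n]
  have hGl : Real.Gamma (lam:ℝ) ≠ 0 := ne_of_gt (Real.Gamma_pos_of_pos (by linarith))
  have hG2 : Real.Gamma ((n:ℝ)+lam+1) ≠ 0 := ne_of_gt (Real.Gamma_pos_of_pos h2)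
  have hQ1 : poch ((n:ℝ)+lam+1) ν ≠ 0 := ne_of_gt (poch_pos h2 ν)
  have hfac : ((Nat.factorial ν : ℝ)) ≠ 0 := by exact_mod_cast (Nat.factorial_ne_zero ν)
  unfold Aco
  rw [poch_succ, poch_succ, poch_succ, Nat.factorial_succ]
  push_cast
  field_simp

lemma R3 (lam ν : ℕ) (hlam : 1 ≤ lam) (hν : ν < lam) :
    Aco (lam+1) 0 ν * (2*((lam:ℝ)+1) * ((ν:ℝ)-lam) * ((lam:ℝ)+1+ν)) =
      Aco lam 0 ν * ((2*(lam:ℝ)+1) * (-(lam:ℝ)) * ((lam:ℝ)+1)) := by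
  have hlamR : (1:ℝ) ≤ (lam:ℝ) := by exact_mod_cast hlam
  have hνlam : (ν:ℝ) - lam ≠ 0 := by
    have : (ν:ℝ) < lam := by exact_mod_cast hν
    linarith
  have hlpos : (0:ℝ) < lam := by linarith
  have hGl : Real.Gamma (lam:ℝ) ≠ 0 := ne_of_gt (Real.Gamma_pos_of_pos hlpos)
  have hQ1 : poch ((lam:ℝ)+1) ν ≠ 0 := ne_of_gt (poch_pos (by linarith) ν)
  have hfac : ((Nat.factorial ν : ℝ)) ≠ 0 := by exact_mod_cast (Nat.factorial_ne_zero ν)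
  have hg1 : Real.Gamma (((0:ℕ):ℝ) + 2 * ((lam+1:ℕ):ℝ)) =
      (2*(lam:ℝ)+1) * (2*(lam:ℝ)) * Real.Gamma (2*(lam:ℝ)) := by
    rw [show ((0:ℕ):ℝ) + 2 * ((lam+1:ℕ):ℝ) = (2*(lam:ℝ)+1)+1 by push_cast; ring,
      Real.Gamma_add_one (by positivity),
      show (2*(lam:ℝ)+1) = (2*(lam:ℝ))+1 by ring,
      Real.Gamma_add_one (by positivity)]
    ring
  have hg2 : Real.Gamma (((0:ℕ):ℝ) + 2 * ((lam:ℕ):ℝ)) = Real.Gamma (2*(lam:ℝ)) := by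
    norm_num
  have hg3 : Real.Gamma (((lam+1:ℕ):ℝ)) = (lam:ℝ) * Real.Gamma (lam:ℝ) := by
    rw [show ((lam+1:ℕ):ℝ) = (lam:ℝ)+1 by push_cast; ring,
      Real.Gamma_add_one (ne_of_gt hlpos)]
  have hg4 : Real.Gamma (((0:ℕ):ℝ) + ((lam+1:ℕ):ℝ) + 1) =
      ((lam:ℝ)+1) * (lam:ℝ) * Real.Gamma (lam:ℝ) := by
    rw [show ((0:ℕ):ℝ) + ((lam+1:ℕ):ℝ) + 1 = ((lam:ℝ)+1)+1 by push_cast; ring,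
      Real.Gamma_add_one (by positivity),
      Real.Gamma_add_one (ne_of_gt hlpos)]
    ring
  have hg5 : Real.Gamma (((0:ℕ):ℝ) + ((lam:ℕ):ℝ) + 1) = (lam:ℝ) * Real.Gamma (lam:ℝ) := by
    rw [show ((0:ℕ):ℝ) + ((lam:ℕ):ℝ) + 1 = (lam:ℝ)+1 by push_cast; ring,
      Real.Gamma_add_one (ne_of_gt hlpos)]
  have hp1 : poch (1 - ((lam+1:ℕ):ℝ)) ν = (-(lam:ℝ)) * poch (1-(lam:ℝ)) ν / ((ν:ℝ)-lam) := by
    rw [show (1 - ((lam+1:ℕ):ℝ)) = -(lam:ℝ) by push_cast; ring,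
      eq_div_iff hνlam]
    have := poch_shift (-(lam:ℝ)) ν
    rw [show (-(lam:ℝ))+1 = 1 - (lam:ℝ) by ring] at this
    rw [this]; ring
  have hp2 : poch (((0:ℕ):ℝ) + ((lam+1:ℕ):ℝ) + 1) ν =
      poch ((lam:ℝ)+1) ν * ((lam:ℝ)+1+ν) / ((lam:ℝ)+1) := by
    rw [show ((0:ℕ):ℝ) + ((lam+1:ℕ):ℝ) + 1 = ((lam:ℝ)+1)+1 by push_cast; ring,
      eq_div_iff (by positivity : ((lam:ℝ)+1) ≠ 0), mul_comm _ ((lam:ℝ)+1), poch_shift]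
  have hp3 : poch (((0:ℕ):ℝ) + ((lam:ℕ):ℝ) + 1) ν = poch ((lam:ℝ)+1) ν := by norm_num
  have hz : (2:ℝ) ^ ((2:ℤ) - 2*((lam+1:ℕ):ℤ)) = (2:ℝ) ^ ((2:ℤ) - 2*(lam:ℤ)) / 4 := by
    rw [show (2:ℤ) - 2*((lam+1:ℕ):ℤ) = ((2:ℤ) - 2*(lam:ℤ)) - 2 by push_cast; ring,
      zpow_sub₀ (by norm_num : (2:ℝ) ≠ 0)]
    norm_num
  have hz0 : (2:ℝ) ^ ((2:ℤ) - 2*(lam:ℤ)) ≠ 0 := zpow_ne_zero _ (by norm_num)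
  unfold Aco
  rw [hg1, hg2, hg3, hg4, hg5, hp1, hp2, hp3, hz]
  have hG2l : Real.Gamma (2*(lam:ℝ)) ≠ 0 := ne_of_gt (Real.Gamma_pos_of_pos (by linarith))
  field_simp
  ring

lemma poch_one_sub_self (lam : ℕ) (hlam : 1 ≤ lam) : poch (1 - (lam:ℝ)) lam = 0 := by
  unfold poch
  apply Finset.prod_eq_zero (i := lam - 1)
  · exact Finset.mem_range.mpr (by omega)
  · have : ((lam - 1 : ℕ):ℝ) = (lam:ℝ) - 1 := by
      rw [Nat.cast_sub hlam]; norm_num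
    rw [this]; ring

lemma Aco_top (lam n : ℕ) (hlam : 1 ≤ lam) : Aco lam n lam = 0 := by
  unfold Aco
  rw [poch_one_sub_self lam hlam]
  ring

lemma gegen_zero (lam x : ℝ) : gegen lam 0 x = 1 := by
  simp [gegen, poch_zero]

lemma gegen_one (lam x : ℝ) : gegen lam 1 x = 2 * lam * x := by
  simp [gegen, poch, Finset.prod_range_one]
  ring

noncomputable def gterm (l x : ℝ) (n k : ℕ) : ℝ :=
  (-1 : ℝ) ^ k * poch l (n - k) /
    ((Nat.factorial k : ℝ) * (Nat.factorial (n - 2 * k) : ℝ)) * (2 * x) ^ (n - 2 * k)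

lemma gegen_eq (l x : ℝ) (n : ℕ) :
    gegen l n x = ∑ k ∈ Finset.range (n / 2 + 1), gterm l x n k := rfl

lemma gt0 (l x : ℝ) (m : ℕ) :
    ((m:ℝ)+2) * gterm l x (m+2) 0 = 2*x*((m:ℝ)+l+1) * gterm l x (m+1) 0 := by
  unfold gterm
  simp only [Nat.sub_zero, Nat.mul_zero, pow_zero, Nat.factorial_zero]
  rw [show m+2 = (m+1)+1 from rfl, poch_succ, Nat.factorial_succ (m+1), pow_succ]
  have h1 : ((Nat.factorial (m+1) : ℝ)) ≠ 0 := by exact_mod_cast (Nat.factorial_ne_zero (m+1))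
  push_cast
  field_simp
  ring

lemma gtI (l x : ℝ) (m k : ℕ) (h : 2*k+1 ≤ m) :
    ((m:ℝ)+2) * gterm l x (m+2) (k+1) =
      2*x*((m:ℝ)+l+1) * gterm l x (m+1) (k+1) - ((m:ℝ)+2*l) * gterm l x m k := by
  obtain ⟨d, rfl⟩ : ∃ d, m = 2*k+1+d := ⟨m - (2*k+1), by omega⟩
  unfold gterm
  simp only [show 2*k+1+d+2 - (k+1) = k+d+2 by omega,
    show 2*k+1+d+2 - 2*(k+1) = d+1 by omega,
    show 2*k+1+d+1 - (k+1) = k+d+1 by omega,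
    show 2*k+1+d+1 - 2*(k+1) = d by omega,
    show 2*k+1+d - k = k+d+1 by omega,
    show 2*k+1+d - 2*k = d+1 by omega]
  rw [show k+d+2 = (k+d+1)+1 from rfl, poch_succ, Nat.factorial_succ d, Nat.factorial_succ k,
    pow_succ (2*x) d, pow_succ (-1:ℝ) k]
  have h1 : ((Nat.factorial d : ℝ)) ≠ 0 := by exact_mod_cast (Nat.factorial_ne_zero d)
  have h2 : ((Nat.factorial k : ℝ)) ≠ 0 := by exact_mod_cast (Nat.factorial_ne_zero k)
  push_cast
  field_simp
  ring

lemma gtB (l x : ℝ) (p : ℕ) :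
    ((2*p:ℕ):ℝ)*gterm l x (2*p+2) (p+1) + 2 * gterm l x (2*p+2) (p+1)
      = -(((2*p:ℕ):ℝ)+2*l) * gterm l x (2*p) p := by
  unfold gterm
  simp only [show 2*p+2 - (p+1) = p+1 by omega,
    show 2*p+2 - 2*(p+1) = 0 by omega,
    show 2*p - p = p by omega,
    show 2*p - 2*p = 0 by omega]
  rw [show p+1 = p+1 from rfl, poch_succ, Nat.factorial_succ p, pow_succ (-1:ℝ) p]
  have h2 : ((Nat.factorial p : ℝ)) ≠ 0 := by exact_mod_cast (Nat.factorial_ne_zero p)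
  push_cast
  field_simp
  ring

lemma gegen_rec (l x : ℝ) (m : ℕ) :
    ((m:ℝ)+2) * gegen l (m+2) x =
      2*x*((m:ℝ)+l+1) * gegen l (m+1) x - ((m:ℝ)+2*l) * gegen l m x := by
  rw [gegen_eq, gegen_eq, gegen_eq, Finset.mul_sum, Finset.mul_sum, Finset.mul_sum]
  rcases Nat.even_or_odd m with ⟨p, rfl⟩ | ⟨p, rfl⟩
  · -- m = p + p
    simp only [show (p+p+2)/2+1 = p+2 by omega, show (p+p+1)/2+1 = p+1 by omega,
      show (p+p)/2+1 = p+1 by omega]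
    rw [show p+2 = (p+1)+1 from rfl, Finset.sum_range_succ, Finset.sum_range_succ',
      Finset.sum_range_succ' (fun k => 2 * x * ((↑(p+p):ℝ) + l + 1) * gterm l x (p+p+1) k) p,
      Finset.sum_range_succ (fun k => ((↑(p+p):ℝ) + 2*l) * gterm l x (p+p) k) p]
    have hI : ∀ k ∈ Finset.range p,
        ((↑(p+p):ℝ)+2) * gterm l x (p+p+2) (k+1) =
          2*x*((↑(p+p):ℝ)+l+1) * gterm l x (p+p+1) (k+1) - ((↑(p+p):ℝ)+2*l) * gterm l x (p+p) k := by
      intro k hk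
      exact gtI l x (p+p) k (by simp at hk; omega)
    rw [Finset.sum_congr rfl hI, Finset.sum_sub_distrib]
    have h0 := gt0 l x (p+p)
    have hB := gtB l x p
    rw [show 2*p = p+p by ring] at hB
    linarith [hB]
  · -- m = 2p+1
    simp only [show (2*p+1+2)/2+1 = p+2 by omega, show (2*p+1+1)/2+1 = p+2 by omega,
      show (2*p+1)/2+1 = p+1 by omega]
    rw [show p+2 = (p+1)+1 from rfl, Finset.sum_range_succ',
      Finset.sum_range_succ' (fun k => 2 * x * ((↑(2*p+1):ℝ) + l + 1) * gterm l x (2*p+1+1) k) (p+1)]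
    have hI : ∀ k ∈ Finset.range (p+1),
        ((↑(2*p+1):ℝ)+2) * gterm l x (2*p+1+2) (k+1) =
          2*x*((↑(2*p+1):ℝ)+l+1) * gterm l x (2*p+1+1) (k+1) - ((↑(2*p+1):ℝ)+2*l) * gterm l x (2*p+1) k := by
      intro k hk
      exact gtI l x (2*p+1) k (by simp at hk; omega)
    rw [Finset.sum_congr rfl hI, Finset.sum_sub_distrib]
    have h0 := gt0 l x (2*p+1)
    linarith

lemma I2 (lam m ν : ℕ) (hlam : 1 ≤ lam) :
    ((m:ℝ)+2) * Aco lam (m+2) ν - ((m:ℝ)+lam+1) * Aco lam (m+1) ν =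
      ((m:ℝ)+lam+1) * Aco lam (m+1) (ν+1) - ((m:ℝ)+2*lam) * Aco lam m (ν+1) := by
  have hlamR : (1:ℝ) ≤ (lam:ℝ) := by exact_mod_cast hlam
  have c1 : ((m:ℝ)+1) ≠ 0 := by positivity
  have c2 : ((m:ℝ)+2) ≠ 0 := by positivity
  have c3 : ((ν:ℝ)+1) ≠ 0 := by positivity
  have c4 : ((m:ℝ)+lam+1+ν) ≠ 0 := by positivity
  have c5 : ((m:ℝ)+lam+2+ν) ≠ 0 := by positivity
  have h1 : Aco lam (m+1) ν = Aco lam m ν * (((m:ℝ)+2*lam) * ((m:ℝ)+1+ν)) /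
      (((m:ℝ)+1) * ((m:ℝ)+lam+1+ν)) := by
    rw [eq_div_iff (by positivity)]; exact R1 lam m ν hlam
  have h2 : Aco lam m (ν+1) = Aco lam m ν * ((1-(lam:ℝ)+ν) * ((m:ℝ)+1+ν)) /
      (((ν:ℝ)+1) * ((m:ℝ)+lam+1+ν)) := by
    rw [eq_div_iff (by positivity)]; exact R2 lam m ν hlam
  have h3 : Aco lam (m+1) (ν+1) = Aco lam (m+1) ν * ((1-(lam:ℝ)+ν) * (((m+1:ℕ):ℝ)+1+ν)) /
      (((ν:ℝ)+1) * (((m+1:ℕ):ℝ)+lam+1+ν)) := by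
    rw [eq_div_iff (by push_cast; positivity)]; exact R2 lam (m+1) ν hlam
  have h4 : Aco lam (m+2) ν = Aco lam (m+1) ν * ((((m+1:ℕ):ℝ)+2*lam) * (((m+1:ℕ):ℝ)+1+ν)) /
      ((((m+1:ℕ):ℝ)+1) * (((m+1:ℕ):ℝ)+lam+1+ν)) := by
    rw [eq_div_iff (by push_cast; positivity)]
    have := R1 lam (m+1) ν hlam
    rw [show (m+1)+1 = m+2 from rfl] at this
    convert this using 3 <;> push_cast <;> ring
  rw [h4, h3, h2, h1]
  push_cast
  field_simp
  ring

noncomputable def Ssum (lam n : ℕ) (θ : ℝ) : ℝ :=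
  ∑ ν ∈ Finset.range lam, Aco lam n ν * Real.sin (((n:ℝ) + 2*ν + 1) * θ)

lemma trig2 (a θ : ℝ) :
    2 * Real.cos θ * Real.sin (a*θ) = Real.sin ((a+1)*θ) + Real.sin ((a-1)*θ) := by
  rw [add_mul, sub_mul, one_mul, Real.sin_add, Real.sin_sub]
  ring

lemma midterm (C A a θ : ℝ) :
    2*Real.cos θ*C*(A*Real.sin (a*θ)) =
      C*A*Real.sin ((a+1)*θ) + C*A*Real.sin ((a-1)*θ) := by
  linear_combination (C*A) * trig2 a θ

lemma I1 (lam m : ℕ) (hlam : 1 ≤ lam) :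
    ((m:ℝ)+lam+1) * Aco lam (m+1) 0 = ((m:ℝ)+2*lam) * Aco lam m 0 := by
  have h := R1 lam m 0 hlam
  norm_num at h
  have c1 : ((m:ℝ)+1) ≠ 0 := by positivity
  apply mul_left_cancel₀ c1
  nlinarith [h]

lemma S_rec (lam m : ℕ) (θ : ℝ) (hlam : 1 ≤ lam) :
    ((m:ℝ)+2) * Ssum lam (m+2) θ =
      2*(Real.cos θ)*((m:ℝ)+lam+1) * Ssum lam (m+1) θ - ((m:ℝ)+2*lam) * Ssum lam m θ := by
  obtain ⟨L, rfl⟩ : ∃ L, lam = L+1 := ⟨lam - 1, by omega⟩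
  unfold Ssum
  rw [Finset.mul_sum, Finset.mul_sum, Finset.mul_sum]
  have e1 : ∀ i ∈ Finset.range (L+1),
      ((m:ℝ)+2) * (Aco (L+1) (m+2) i * Real.sin ((((m+2:ℕ):ℝ) + 2*(i:ℝ) + 1) * θ)) =
        (((m:ℝ)+2) * Aco (L+1) (m+2) i) * Real.sin (((m:ℝ) + 2*((i+1:ℕ):ℝ) + 1) * θ) := by
    intro i _
    rw [show ((m+2:ℕ):ℝ) + 2*(i:ℝ) + 1 = (m:ℝ) + 2*((i+1:ℕ):ℝ) + 1 by push_cast; ring]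
    ring
  have e2 : ∀ i ∈ Finset.range (L+1),
      2*(Real.cos θ)*((m:ℝ)+((L+1:ℕ):ℝ)+1) * (Aco (L+1) (m+1) i *
          Real.sin ((((m+1:ℕ):ℝ) + 2*(i:ℝ) + 1) * θ)) =
        (((m:ℝ)+((L+1:ℕ):ℝ)+1) * Aco (L+1) (m+1) i) * Real.sin (((m:ℝ) + 2*((i+1:ℕ):ℝ) + 1) * θ)
          + (((m:ℝ)+((L+1:ℕ):ℝ)+1) * Aco (L+1) (m+1) i) * Real.sin (((m:ℝ) + 2*(i:ℝ) + 1) * θ) := by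
    intro i _
    rw [show ((m+1:ℕ):ℝ) + 2*(i:ℝ) + 1 = (m:ℝ) + 2*(i:ℝ) + 2 by push_cast; ring]
    have h := midterm ((m:ℝ)+((L+1:ℕ):ℝ)+1) (Aco (L+1) (m+1) i) ((m:ℝ) + 2*(i:ℝ) + 2) θ
    rw [show ((m:ℝ) + 2*(i:ℝ) + 2 + 1) = (m:ℝ) + 2*((i+1:ℕ):ℝ) + 1 by push_cast; ring,
      show ((m:ℝ) + 2*(i:ℝ) + 2 - 1) = (m:ℝ) + 2*(i:ℝ) + 1 by ring] at h
    exact h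
  rw [Finset.sum_congr rfl e1, Finset.sum_congr rfl e2, Finset.sum_add_distrib]
  simp only [← mul_assoc]
  have key : ∑ i ∈ Finset.range (L+1),
        ((((m:ℝ)+2) * Aco (L+1) (m+2) i - ((m:ℝ)+((L+1:ℕ):ℝ)+1) * Aco (L+1) (m+1) i) *
          Real.sin (((m:ℝ) + 2*((i+1:ℕ):ℝ) + 1) * θ)) =
      ∑ i ∈ Finset.range (L+1),
        ((((m:ℝ)+((L+1:ℕ):ℝ)+1) * Aco (L+1) (m+1) i - ((m:ℝ)+2*((L+1:ℕ):ℝ)) * Aco (L+1) m i) *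
          Real.sin (((m:ℝ) + 2*(i:ℝ) + 1) * θ)) := by
    have step1 : ∀ i ∈ Finset.range (L+1),
        ((((m:ℝ)+2) * Aco (L+1) (m+2) i - ((m:ℝ)+((L+1:ℕ):ℝ)+1) * Aco (L+1) (m+1) i) *
            Real.sin (((m:ℝ) + 2*((i+1:ℕ):ℝ) + 1) * θ)) =
          ((((m:ℝ)+((L+1:ℕ):ℝ)+1) * Aco (L+1) (m+1) (i+1) - ((m:ℝ)+2*((L+1:ℕ):ℝ)) * Aco (L+1) m (i+1)) *
            Real.sin (((m:ℝ) + 2*((i+1:ℕ):ℝ) + 1) * θ)) := by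
      intro i _
      rw [I2 (L+1) m i hlam]
    rw [Finset.sum_congr rfl step1, Finset.sum_range_succ, Finset.sum_range_succ']
    rw [Aco_top (L+1) (m+1) hlam, Aco_top (L+1) m hlam]
    have h0 : ((m:ℝ)+((L+1:ℕ):ℝ)+1) * Aco (L+1) (m+1) 0 - ((m:ℝ)+2*((L+1:ℕ):ℝ)) * Aco (L+1) m 0 = 0 := by
      have := I1 (L+1) m hlam
      push_cast at this ⊢
      linarith
    rw [h0]
    ring
  simp only [sub_mul] at key
  rw [Finset.sum_sub_distrib, Finset.sum_sub_distrib] at key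
  linarith

lemma S1id (lam ν : ℕ) (hlam : 1 ≤ lam) :
    Aco lam 1 ν = lam * Aco lam 0 ν + lam * Aco lam 0 (ν+1) := by
  have h1 := R1 lam 0 ν hlam
  have h2 := R2 lam 0 ν hlam
  norm_num at h1 h2
  have hc : (((ν:ℝ)+1)*((lam:ℝ)+1+ν)) ≠ 0 := by positivity
  apply mul_right_cancel₀ hc
  linear_combination ((ν:ℝ)+1) * h1 - (lam:ℝ) * h2

lemma S0a (lam : ℕ) (hlam : 1 ≤ lam) :
    Aco (lam+1) 0 0 = (3/4) * Aco lam 0 0 - (1/4) * Aco lam 0 1 := by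
  have h3 := R3 lam 0 hlam (by omega)
  have h2 := R2 lam 0 0 hlam
  norm_num at h3 h2
  have hl : (0:ℝ) < lam := by exact_mod_cast hlam
  have hX : Aco (lam+1) 0 0 = Aco lam 0 0 * ((2*(lam:ℝ)+1) * (lam:ℝ) * ((lam:ℝ)+1)) /
      (2*((lam:ℝ)+1) * (lam:ℝ) * ((lam:ℝ)+1)) := by
    rw [eq_div_iff (by positivity)]
    linear_combination h3
  have hZ : Aco lam 0 1 = Aco lam 0 0 * (1-(lam:ℝ)) / ((lam:ℝ)+1) := by
    rw [eq_div_iff (by positivity)]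
    linear_combination h2
  rw [hX, hZ]
  field_simp
  ring

lemma S0b (lam j : ℕ) (h : j + 1 < lam) :
    Aco (lam+1) 0 (j+1) =
      (1/2) * Aco lam 0 (j+1) - (1/4) * Aco lam 0 j - (1/4) * Aco lam 0 (j+2) := by
  have hlam : 1 ≤ lam := by omega
  have h3 := R3 lam (j+1) hlam h
  have h2a := R2 lam 0 (j+1) hlam
  have h2b := R2 lam 0 j hlam
  push_cast at h3 h2a h2b
  norm_num at h3 h2a h2b
  have hjR : (j:ℝ) + 1 < lam := by exact_mod_cast h
  have hjl : (j:ℝ) + 1 - lam ≠ 0 := by linarith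
  have hjl' : 1 - (lam:ℝ) + j ≠ 0 := by intro hc; apply hjl; linarith
  have hl : (0:ℝ) < lam := by exact_mod_cast hlam
  have hd1 : 2*((lam:ℝ)+1) * ((j:ℝ)+1-lam) * ((lam:ℝ)+2+j) ≠ 0 := by
    apply mul_ne_zero (mul_ne_zero (by positivity) hjl) (by positivity)
  have hd2 : (1 - (lam:ℝ)+j) * (1+(j:ℝ)) ≠ 0 :=
    mul_ne_zero hjl' (by positivity)
  have hX : Aco (lam+1) 0 (j+1) =
      Aco lam 0 (j+1) * (-((2*(lam:ℝ)+1) * (lam:ℝ) * ((lam:ℝ)+1))) /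
        (2*((lam:ℝ)+1) * ((j:ℝ)+1-lam) * ((lam:ℝ)+2+j)) := by
    rw [eq_div_iff hd1]
    linear_combination h3
  have hZ : Aco lam 0 (j+1+1) =
      Aco lam 0 (j+1) * ((1-(lam:ℝ)+((j:ℝ)+1)) * (1+((j:ℝ)+1))) /
        ((((j:ℝ)+1)+1) * ((lam:ℝ)+1+((j:ℝ)+1))) := by
    rw [eq_div_iff (by positivity)]
    linear_combination h2a
  have hW : Aco lam 0 j =
      Aco lam 0 (j+1) * (((j:ℝ)+1) * ((lam:ℝ)+1+j)) / ((1-(lam:ℝ)+j) * (1+(j:ℝ))) := by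
    rw [eq_div_iff hd2]
    linear_combination -h2b
  rw [show j+2 = j+1+1 from rfl, hX, hZ, hW]
  field_simp
  ring

lemma S0c (K : ℕ) :
    Aco (K+2) 0 (K+1) = -(1/4) * Aco (K+1) 0 K := by
  have hr2 := R2 (K+2) 0 K (by omega)
  have hr3 := R3 (K+1) K (by omega) (by omega)
  push_cast at hr2 hr3
  norm_num at hr2 hr3
  have hX : Aco (K+2) 0 (K+1) =
      Aco (K+2) 0 K * (-(1+(K:ℝ))) / (((K:ℝ)+1) * ((K:ℝ)+2+1+K)) := by
    rw [eq_div_iff (by positivity)]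
    linear_combination hr2
  have hY : Aco (K+2) 0 K =
      Aco (K+1) 0 K * ((2*((K:ℝ)+1)+1) * (-((K:ℝ)+1)) * ((K:ℝ)+1+1)) /
        (2*((K:ℝ)+2) * (-1) * ((K:ℝ)+1+1+K)) := by
    rw [eq_div_iff (by intro hc; nlinarith [mul_eq_zero.mp hc])]
    linear_combination hr3
  rw [hX, hY]
  have : ((K:ℝ)+1+1+K) ≠ 0 := by positivity
  field_simp
  ring

lemma poch_one_sub_ge (lam k : ℕ) (hlam : 1 ≤ lam) (hk : lam ≤ k) :
    poch (1 - (lam:ℝ)) k = 0 := by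
  unfold poch
  apply Finset.prod_eq_zero (i := lam - 1)
  · exact Finset.mem_range.mpr (by omega)
  · have : ((lam - 1 : ℕ):ℝ) = (lam:ℝ) - 1 := by
      rw [Nat.cast_sub hlam]; norm_num
    rw [this]; ring

lemma Aco_ge (lam n k : ℕ) (hlam : 1 ≤ lam) (hk : lam ≤ k) : Aco lam n k = 0 := by
  unfold Aco
  rw [poch_one_sub_ge lam k hlam hk]
  ring

lemma trig3 (a θ : ℝ) :
    Real.sin θ ^ 2 * Real.sin (a*θ) =
      (1/2) * Real.sin (a*θ) - (1/4) * Real.sin ((a+2)*θ) - (1/4) * Real.sin ((a-2)*θ) := by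
  rw [show (a+2)*θ = a*θ + 2*θ by ring, show (a-2)*θ = a*θ - 2*θ by ring,
    Real.sin_add, Real.sin_sub, Real.cos_two_mul]
  linear_combination (Real.sin (a*θ)) * (Real.sin_sq_add_cos_sq θ)

lemma S0b' (lam j : ℕ) (h : j + 1 ≤ lam) :
    Aco (lam+1) 0 (j+1) =
      (1/2) * Aco lam 0 (j+1) - (1/4) * Aco lam 0 j - (1/4) * Aco lam 0 (j+2) := by
  rcases Nat.lt_or_ge (j+1) lam with hc | hc
  · exact S0b lam j hc
  · have hl : lam = j+1 := by omega
    subst hl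
    rw [S0c j, Aco_top (j+1) 0 (by omega), Aco_ge (j+1) 0 (j+2) (by omega) (by omega)]
    ring

lemma S_step (K : ℕ) (hK : 1 ≤ K) (θ : ℝ) :
    Ssum (K+1) 0 θ = Real.sin θ ^ 2 * Ssum K 0 θ := by
  obtain ⟨J, rfl⟩ : ∃ J, K = J+1 := ⟨K - 1, by omega⟩
  unfold Ssum
  rw [Finset.mul_sum]
  set A : ℕ → ℝ := fun k => Aco (J+1) 0 k with hA
  set A' : ℕ → ℝ := fun k => Aco (J+1+1) 0 k with hA'
  set s : ℕ → ℝ := fun k => Real.sin ((((0:ℕ):ℝ) + 2*(k:ℝ) + 1) * θ) with hs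
  have hs0 : s 0 = Real.sin θ := by
    simp only [hs]; norm_num
  have hQ : ∑ i ∈ Finset.range J, A (i+2) * s (i+1) =
      (∑ i ∈ Finset.range J, A (i+1) * s i) - A 1 * s 0 := by
    have q1 : ∑ i ∈ Finset.range (J+1), A (i+1) * s i =
        (∑ i ∈ Finset.range J, A (i+2) * s (i+1)) + A 1 * s 0 :=
      Finset.sum_range_succ' (fun i => A (i+1) * s i) J
    have q2 : ∑ i ∈ Finset.range (J+1), A (i+1) * s i =
        (∑ i ∈ Finset.range J, A (i+1) * s i) + A (J+1) * s J :=
      Finset.sum_range_succ (fun i => A (i+1) * s i) J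
    have hz : A (J+1) = 0 := Aco_top (J+1) 0 (by omega)
    rw [hz] at q2
    rw [q1] at q2
    linarith
  have hL : ∑ ν ∈ Finset.range (J+1+1), A' ν * s ν =
      (1/2) * (∑ i ∈ Finset.range J, A (i+1) * s (i+1))
        - (1/4) * (∑ i ∈ Finset.range (J+1), A i * s (i+1))
        - (1/4) * ((∑ i ∈ Finset.range J, A (i+1) * s i) - A 1 * s 0)
        + ((3/4) * A 0 - (1/4) * A 1) * s 0 := by
    rw [Finset.sum_range_succ' (fun ν => A' ν * s ν) (J+1)]
    have e1 : ∀ k ∈ Finset.range (J+1), A' (k+1) * s (k+1) =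
        ((1/2) * A (k+1) - (1/4) * A k - (1/4) * A (k+2)) * s (k+1) := by
      intro k hk
      have := S0b' (J+1) k (by simp at hk; omega)
      simp only [hA, hA']
      rw [this]
    rw [Finset.sum_congr rfl e1]
    have e2 : A' 0 = (3/4) * A 0 - (1/4) * A 1 := S0a (J+1) (by omega)
    rw [e2]
    simp only [sub_mul]
    rw [Finset.sum_sub_distrib, Finset.sum_sub_distrib]
    have e3 : ∑ k ∈ Finset.range (J+1), (1/2) * A (k+1) * s (k+1) =
        (1/2) * ∑ i ∈ Finset.range J, A (i+1) * s (i+1) := by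
      rw [Finset.sum_range_succ, Finset.mul_sum]
      have hz : A (J+1) = 0 := Aco_top (J+1) 0 (by omega)
      rw [hz]
      simp [mul_assoc]
    have e4 : ∑ k ∈ Finset.range (J+1), (1/4) * A k * s (k+1) =
        (1/4) * ∑ i ∈ Finset.range (J+1), A i * s (i+1) := by
      rw [Finset.mul_sum]; exact Finset.sum_congr rfl (fun k _ => by ring)
    have e5 : ∑ k ∈ Finset.range (J+1), (1/4) * A (k+2) * s (k+1) =
        (1/4) * ((∑ i ∈ Finset.range J, A (i+1) * s i) - A 1 * s 0) := by
      rw [Finset.sum_range_succ]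
      have hz : A (J+2) = 0 := Aco_ge (J+1) 0 (J+2) (by omega) (by omega)
      rw [hz, ← hQ, Finset.mul_sum]
      simp [mul_assoc]
    rw [e3, e4, e5]
  have hR : ∑ i ∈ Finset.range (J+1), Real.sin θ ^ 2 * (A i * s i) =
      (1/2) * ((∑ i ∈ Finset.range J, A (i+1) * s (i+1)) + A 0 * s 0)
        - (1/4) * (∑ i ∈ Finset.range (J+1), A i * s (i+1))
        - (1/4) * ((∑ i ∈ Finset.range J, A (i+1) * s i) - A 0 * Real.sin θ) := by
    have e1 : ∀ i ∈ Finset.range (J+1), Real.sin θ ^ 2 * (A i * s i) =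
        (1/2) * (A i * s i) - (1/4) * (A i * s (i+1))
          - (1/4) * (A i * Real.sin ((2*(i:ℝ) - 1) * θ)) := by
      intro i _
      have h := trig3 (((0:ℕ):ℝ) + 2*(i:ℝ) + 1) θ
      rw [show (((0:ℕ):ℝ) + 2*(i:ℝ) + 1 + 2) = ((0:ℕ):ℝ) + 2*((i+1:ℕ):ℝ) + 1 by push_cast; ring,
        show (((0:ℕ):ℝ) + 2*(i:ℝ) + 1 - 2) = 2*(i:ℝ) - 1 by push_cast; ring] at h
      simp only [hs]
      linear_combination (A i) * h
    rw [Finset.sum_congr rfl e1]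
    simp only [sub_sub]
    rw [Finset.sum_sub_distrib, Finset.sum_add_distrib]
    have e2 : ∑ i ∈ Finset.range (J+1), (1/2) * (A i * s i) =
        (1/2) * ((∑ i ∈ Finset.range J, A (i+1) * s (i+1)) + A 0 * s 0) := by
      rw [← Finset.mul_sum, Finset.sum_range_succ' (fun i => A i * s i) J]
    have e3 : ∑ i ∈ Finset.range (J+1), (1/4) * (A i * s (i+1)) =
        (1/4) * ∑ i ∈ Finset.range (J+1), A i * s (i+1) := by
      rw [← Finset.mul_sum]
    have e4 : ∑ i ∈ Finset.range (J+1), (1/4) * (A i * Real.sin ((2*(i:ℝ) - 1) * θ)) =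
        (1/4) * ((∑ i ∈ Finset.range J, A (i+1) * s i) - A 0 * Real.sin θ) := by
      rw [← Finset.mul_sum,
        Finset.sum_range_succ' (fun i => A i * Real.sin ((2*(i:ℝ) - 1) * θ)) J]
      have e5 : ∀ i ∈ Finset.range J,
          A (i+1) * Real.sin ((2*((i+1:ℕ):ℝ) - 1) * θ) = A (i+1) * s i := by
        intro i _
        simp only [hs]
        rw [show (2*((i+1:ℕ):ℝ) - 1) = ((0:ℕ):ℝ) + 2*(i:ℝ) + 1 by push_cast; ring]
      rw [Finset.sum_congr rfl e5,
        show (2*((0:ℕ):ℝ) - 1) * θ = -θ by push_cast; ring, Real.sin_neg]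
      ring
    rw [e2, e3, e4]
  rw [hL, hR, hs0]
  ring

lemma S_zero (lam : ℕ) (hlam : 1 ≤ lam) (θ : ℝ) :
    Ssum lam 0 θ = Real.sin θ ^ (2*lam - 1) := by
  induction lam, hlam using Nat.le_induction with
  | base =>
    unfold Ssum Aco
    norm_num [poch_zero, Real.Gamma_one, Real.Gamma_two]
  | succ K hK ih =>
    rw [S_step K hK θ, ih, show 2*(K+1) - 1 = (2*K - 1)+2 by omega, pow_add]
    ring

lemma S_one (lam : ℕ) (hlam : 1 ≤ lam) (θ : ℝ) :
    Ssum lam 1 θ = 2*(lam:ℝ)*Real.cos θ * Ssum lam 0 θ := by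
  obtain ⟨L, rfl⟩ : ∃ L, lam = L+1 := ⟨lam - 1, by omega⟩
  unfold Ssum
  rw [Finset.mul_sum]
  have e1 : ∀ ν ∈ Finset.range (L+1),
      Aco (L+1) 1 ν * Real.sin ((((1:ℕ):ℝ) + 2*(ν:ℝ) + 1) * θ) =
        ((L+1:ℕ):ℝ) * Aco (L+1) 0 ν * Real.sin ((((1:ℕ):ℝ) + 2*(ν:ℝ) + 1) * θ)
          + ((L+1:ℕ):ℝ) * Aco (L+1) 0 (ν+1) * Real.sin ((((1:ℕ):ℝ) + 2*(ν:ℝ) + 1) * θ) := by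
    intro ν _
    rw [S1id (L+1) ν (by omega)]
    ring
  rw [Finset.sum_congr rfl e1, Finset.sum_add_distrib]
  have e2 : ∀ ν ∈ Finset.range (L+1),
      2*((L+1:ℕ):ℝ)*Real.cos θ * (Aco (L+1) 0 ν * Real.sin ((((0:ℕ):ℝ) + 2*(ν:ℝ) + 1) * θ)) =
        ((L+1:ℕ):ℝ) * Aco (L+1) 0 ν * Real.sin ((((1:ℕ):ℝ) + 2*(ν:ℝ) + 1) * θ)
          + ((L+1:ℕ):ℝ) * Aco (L+1) 0 ν * Real.sin ((2*(ν:ℝ)) * θ) := by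
    intro ν _
    have h := midterm ((L+1:ℕ):ℝ) (Aco (L+1) 0 ν) (((0:ℕ):ℝ) + 2*(ν:ℝ) + 1) θ
    rw [show (((0:ℕ):ℝ) + 2*(ν:ℝ) + 1 + 1) = ((1:ℕ):ℝ) + 2*(ν:ℝ) + 1 by push_cast; ring,
      show (((0:ℕ):ℝ) + 2*(ν:ℝ) + 1 - 1) = 2*(ν:ℝ) by push_cast; ring] at h
    linear_combination h
  rw [Finset.sum_congr rfl e2, Finset.sum_add_distrib]
  congr 1
  rw [Finset.sum_range_succ'
    (fun ν => ((L+1:ℕ):ℝ) * Aco (L+1) 0 ν * Real.sin ((2*(ν:ℝ)) * θ)) L]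
  have e3 : ∀ ν ∈ Finset.range L,
      ((L+1:ℕ):ℝ) * Aco (L+1) 0 (ν+1) * Real.sin ((2*((ν+1:ℕ):ℝ)) * θ) =
        ((L+1:ℕ):ℝ) * Aco (L+1) 0 (ν+1) * Real.sin ((((1:ℕ):ℝ) + 2*(ν:ℝ) + 1) * θ) := by
    intro ν _
    rw [show (2*((ν+1:ℕ):ℝ)) = ((1:ℕ):ℝ) + 2*(ν:ℝ) + 1 by push_cast; ring]
  rw [Finset.sum_congr rfl e3,
    show (2*((0:ℕ):ℝ)) * θ = 0 by push_cast; ring, Real.sin_zero,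
    Finset.sum_range_succ
      (fun ν => ((L+1:ℕ):ℝ) * Aco (L+1) 0 (ν+1) * Real.sin ((((1:ℕ):ℝ) + 2*(ν:ℝ) + 1) * θ)) L,
    Aco_top (L+1) 0 (by omega)]
  ring

lemma main_lemma (lam : ℕ) (hlam : 1 ≤ lam) (θ : ℝ) (n : ℕ) :
    gegen (lam:ℝ) n (Real.cos θ) * Real.sin θ ^ (2*lam - 1) = Ssum lam n θ := by
  induction n using Nat.twoStepInduction with
  | zero => rw [gegen_zero, S_zero lam hlam θ, one_mul]
  | one => rw [gegen_one, S_one lam hlam θ, S_zero lam hlam θ]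
  | more n ih ih1 =>
    have g := gegen_rec (lam:ℝ) (Real.cos θ) n
    have s := S_rec lam n θ hlam
    have hne : ((n:ℝ)+2) ≠ 0 := by positivity
    apply mul_left_cancel₀ hne
    have e1 : ((n:ℝ)+2) * (gegen (lam:ℝ) (n+2) (Real.cos θ) * Real.sin θ ^ (2*lam - 1)) =
        2*(Real.cos θ)*((n:ℝ)+lam+1) * (gegen (lam:ℝ) (n+1) (Real.cos θ) * Real.sin θ ^ (2*lam - 1))
          - ((n:ℝ)+2*lam) * (gegen (lam:ℝ) n (Real.cos θ) * Real.sin θ ^ (2*lam - 1)) := by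
      linear_combination (Real.sin θ ^ (2*lam - 1)) * g
    rw [e1, ih, ih1]
    linarith [s]

theorem szego_truncated_representation (lam : ℕ) (hlam : 1 ≤ lam) (n : ℕ) (θ : ℝ) :
    gegen lam n (Real.cos θ) * (Real.sin θ) ^ (2 * lam - 1) =
      (2 : ℝ) ^ ((2 : ℤ) - 2 * lam) * Real.Gamma (n + 2 * lam) /
          (Real.Gamma lam * Real.Gamma (n + lam + 1)) *
        ∑ ν ∈ Finset.range lam,
          poch (1 - lam) ν * poch (n + 1) ν /
              ((Nat.factorial ν : ℝ) * poch (n + lam + 1) ν) *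
            Real.sin (((n : ℝ) + 2 * ν + 1) * θ) := by
  rw [main_lemma lam hlam θ n]
  unfold Ssum Aco
  rw [Finset.mul_sum]
  exact Finset.sum_congr rfl (fun ν _ => by ring)
end

section
/- For every n ≥ 0 and every integer m with 1 ≤ m ≤ n+1, ∫₀^π cos(2mθ) log((U_n(cos θ))²) dθ = π(1/m − δ_{m,n+1}), where U_n is the Chebyshev polynomial of the second kind and δ is the Kronecker delta. -/
open Finset

open Real MeasureTheory Filter Topology Set intervalIntegral

lemma poch_one (j : ℕ) : poch 1 j = (Nat.factorial j : ℝ) := by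
  unfold poch
  induction j with
  | zero => simp
  | succ j ih =>
      rw [Finset.prod_range_succ, ih, Nat.factorial_succ]
      push_cast; ring

noncomputable def S (n : ℕ) (y : ℝ) : ℝ :=
  ∑ k ∈ Finset.range (n + 1), (-1 : ℝ) ^ k * ((n - k).choose k : ℝ) * y ^ (n - 2 * k)

lemma choose_zero_of (n k : ℕ) (h : n < 2 * k) : ((n - k).choose k) = 0 := by
  apply Nat.choose_eq_zero_of_lt; omega

lemma gegen_one_eq (n : ℕ) (x : ℝ) : gegen 1 n x = S n (2 * x) := by
  unfold gegen S
  rw [← Finset.sum_subset (Finset.range_subset_range.2 (by omega : n / 2 + 1 ≤ n + 1))]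
  · apply Finset.sum_congr rfl
    intro k hk
    rw [Finset.mem_range] at hk
    have h2k : 2 * k ≤ n := by omega
    have : (n - k).choose k * Nat.factorial k * Nat.factorial (n - 2 * k) = Nat.factorial (n - k) := by
      have := Nat.choose_mul_factorial_mul_factorial (show k ≤ n - k by omega)
      rwa [show n - k - k = n - 2 * k by omega] at this
    rw [poch_one, ← this]
    have hk0 : (Nat.factorial k : ℝ) ≠ 0 := Nat.cast_ne_zero.2 (Nat.factorial_ne_zero k)
    have hk1 : (Nat.factorial (n - 2 * k) : ℝ) ≠ 0 := Nat.cast_ne_zero.2 (Nat.factorial_ne_zero _)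
    push_cast
    field_simp
  · intro k hk hk'
    rw [Finset.mem_range] at hk hk'
    rw [choose_zero_of n k (by omega)]
    simp

lemma S_rec_s8 (n : ℕ) (y : ℝ) : S (n + 2) y = y * S (n + 1) y - S n y := by
  unfold S
  have hA : y * ∑ k ∈ Finset.range (n + 2), (-1 : ℝ) ^ k * ((n + 1 - k).choose k : ℝ) * y ^ (n + 1 - 2 * k)
      = ∑ k ∈ Finset.range (n + 3), (-1 : ℝ) ^ k * ((n + 1 - k).choose k : ℝ) * y ^ (n + 2 - 2 * k) := by
    rw [Finset.mul_sum, ← Finset.sum_subset (Finset.range_subset_range.2 (by omega : n + 2 ≤ n + 3))]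
    · apply Finset.sum_congr rfl
      intro k hk
      rcases le_or_gt (2 * k) (n + 1) with h | h
      · rw [show n + 2 - 2 * k = (n + 1 - 2 * k) + 1 by omega, pow_succ]
        ring
      · rw [choose_zero_of (n + 1) k h]; simp
    · intro k hk hk'
      rw [Finset.mem_range] at hk hk'
      rw [choose_zero_of (n + 1) k (by omega)]
      simp
  have hB : (∑ k ∈ Finset.range (n + 3),
        (if k = 0 then 0 else (-1 : ℝ) ^ (k - 1) * ((n - (k - 1)).choose (k - 1) : ℝ) * y ^ (n - 2 * (k - 1))))
      = ∑ k ∈ Finset.range (n + 1), (-1 : ℝ) ^ k * ((n - k).choose k : ℝ) * y ^ (n - 2 * k) := by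
    rw [Finset.sum_range_succ' (fun k => if k = 0 then (0:ℝ) else (-1 : ℝ) ^ (k - 1) * ((n - (k - 1)).choose (k - 1) : ℝ) * y ^ (n - 2 * (k - 1))) (n + 2)]
    simp only [Nat.succ_ne_zero, if_false, Nat.add_sub_cancel, if_true, reduceIte, add_zero]
    symm
    apply Finset.sum_subset (Finset.range_subset_range.2 (by omega : n + 1 ≤ n + 2))
    intro k hk hk'
    rw [Finset.mem_range] at hk hk'
    rw [choose_zero_of n k (by omega)]
    simp
  rw [hA, ← hB, ← Finset.sum_sub_distrib]
  apply Finset.sum_congr rfl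
  intro k hk
  rcases Nat.eq_zero_or_pos k with rfl | hk0
  · simp
  · obtain ⟨j, rfl⟩ : ∃ j, k = j + 1 := ⟨k - 1, by omega⟩
    simp only [Nat.succ_ne_zero, if_false, Nat.add_sub_cancel]
    have hexp : n + 2 - 2 * (j + 1) = n - 2 * j := by omega
    have pas : (n + 1 - j).choose (j + 1) = (n - j).choose (j + 1) + (n - j).choose j := by
      rcases le_or_gt j n with h | h
      · rw [show n + 1 - j = (n - j) + 1 by omega, Nat.choose_succ_succ']
        exact Nat.add_comm _ _
      · rw [show n + 1 - j = 0 by omega, show n - j = 0 by omega]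
        simp [Nat.choose_eq_zero_of_lt (show 0 < j + 1 by omega),
          Nat.choose_eq_zero_of_lt (show 0 < j by omega)]
    rw [hexp, show n + 2 - (j + 1) = n + 1 - j by omega, show n + 1 - (j + 1) = n - j by omega, pas]
    push_cast
    ring

lemma S_cos (n : ℕ) (θ : ℝ) : S n (2 * Real.cos θ) * Real.sin θ = Real.sin (((n : ℝ) + 1) * θ) := by
  induction n using Nat.twoStepInduction generalizing θ with
  | zero => unfold S; norm_num
  | one =>
      unfold S
      rw [Finset.sum_range_succ, Finset.sum_range_one]
      norm_num [Real.sin_two_mul]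
      ring
  | more n ih1 ih2 =>
      have e1 := ih1 θ
      have e2 := ih2 θ
      have h1 : Real.sin (((n : ℝ) + 3) * θ)
          = Real.sin (((n : ℝ) + 2) * θ) * Real.cos θ + Real.cos (((n : ℝ) + 2) * θ) * Real.sin θ := by
        rw [show ((n : ℝ) + 3) * θ = ((n : ℝ) + 2) * θ + θ by ring]; exact Real.sin_add _ _
      have h2 : Real.sin (((n : ℝ) + 1) * θ)
          = Real.sin (((n : ℝ) + 2) * θ) * Real.cos θ - Real.cos (((n : ℝ) + 2) * θ) * Real.sin θ := by
        rw [show ((n : ℝ) + 1) * θ = ((n : ℝ) + 2) * θ - θ by ring]; exact Real.sin_sub _ _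
      rw [S_rec_s8]
      push_cast at e1 e2 ⊢
      rw [show ((n : ℝ) + 2 + 1) * θ = ((n : ℝ) + 3) * θ by ring]
      rw [show ((n : ℝ) + 1 + 1) * θ = ((n : ℝ) + 2) * θ by ring] at e2
      linear_combination (2 * Real.cos θ) * e2 - e1 - h1 - h2

lemma gegen_U (n : ℕ) (θ : ℝ) :
    gegen 1 n (Real.cos θ) * Real.sin θ = Real.sin (((n : ℝ) + 1) * θ) := by
  rw [gegen_one_eq]; exact S_cos n θ

lemma sin_lb {θ : ℝ} (h0 : 0 ≤ θ) (h1 : θ ≤ π) :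
    2 / π ^ 2 * (θ * (π - θ)) ≤ Real.sin θ := by
  have hπ := Real.pi_pos
  rcases le_total θ (π / 2) with h | h
  · have hs := Real.mul_le_sin h0 h
    calc 2 / π ^ 2 * (θ * (π - θ)) = (2 / π * θ) * ((π - θ) / π) := by ring
    _ ≤ (2 / π * θ) * 1 := by
        apply mul_le_mul_of_nonneg_left _ (mul_nonneg (by positivity) h0)
        rw [div_le_one hπ]; linarith
    _ = 2 / π * θ := mul_one _
    _ ≤ Real.sin θ := hs
  · have hs := Real.mul_le_sin (by linarith : (0:ℝ) ≤ π - θ) (by linarith : π - θ ≤ π / 2)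
    rw [Real.sin_pi_sub] at hs
    calc 2 / π ^ 2 * (θ * (π - θ)) = (2 / π * (π - θ)) * (θ / π) := by ring
    _ ≤ (2 / π * (π - θ)) * 1 := by
        apply mul_le_mul_of_nonneg_left _ (mul_nonneg (by positivity) (by linarith))
        rw [div_le_one hπ]; linarith
    _ = 2 / π * (π - θ) := mul_one _
    _ ≤ Real.sin θ := hs

lemma intervalIntegrable_log01 : IntervalIntegrable Real.log volume 0 1 := by
  have h := intervalIntegrable_deriv_of_nonneg (a := 0) (b := 1)
      (g := fun θ => θ - θ * Real.log θ) (g' := fun θ => -Real.log θ)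
      ((continuous_id.sub Real.continuous_mul_log).continuousOn)
      (fun x hx => by
        simp only [min_eq_left, zero_le_one, max_eq_right] at hx
        have hx0 : x ≠ 0 := ne_of_gt hx.1
        have := (hasDerivAt_id x).sub (Real.hasDerivAt_mul_log hx0)
        exact this.congr_deriv (by ring))
      (fun x hx => by
        simp only [min_eq_left, zero_le_one, max_eq_right] at hx
        have : Real.log x ≤ 0 := Real.log_nonpos hx.1.le hx.2.le
        show (0:ℝ) ≤ -Real.log x
        linarith)
  rw [show Real.log = -(fun θ : ℝ => -Real.log θ) from funext fun x => by simp]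
  exact h.neg

lemma intervalIntegrable_log0pi : IntervalIntegrable Real.log volume 0 π := by
  apply intervalIntegrable_log01.trans
  apply intervalIntegrable_log
  rw [Set.uIcc_of_le (by linarith [Real.pi_gt_three] : (1:ℝ) ≤ π)]
  intro h
  simp only [Set.mem_Icc] at h
  linarith

lemma intervalIntegrable_log_pi_sub : IntervalIntegrable (fun θ => Real.log (π - θ)) volume 0 π := by
  have h := intervalIntegrable_log0pi.comp_sub_left π
  simpa using h.symm

lemma intervalIntegrable_log_sin_sq : IntervalIntegrable (fun θ => Real.log (Real.sin θ ^ 2)) volume 0 π := by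
  have hπ := Real.pi_pos
  set g : ℝ → ℝ := fun θ => (2 * Real.log (π ^ 2 / 2)) - 2 * Real.log θ - 2 * Real.log (π - θ) with hg
  have hgi : IntervalIntegrable g volume 0 π := by
    apply IntervalIntegrable.sub
    apply IntervalIntegrable.sub
    · exact intervalIntegrable_const
    · exact intervalIntegrable_log0pi.const_mul 2
    · exact intervalIntegrable_log_pi_sub.const_mul 2
  apply IntervalIntegrable.mono_fun hgi
  · exact ((Real.measurable_log.comp ((Real.continuous_sin.pow 2).measurable)).aestronglyMeasurable)
  · rw [Filter.EventuallyLE, ae_restrict_iff' measurableSet_uIoc]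
    apply Filter.Eventually.of_forall
    intro θ hθ
    rw [uIoc_of_le hπ.le] at hθ
    rcases eq_or_lt_of_le hθ.2 with rfl | hθπ
    · simp [Real.sin_pi]
    · have hθ0 := hθ.1
      have hs : 0 < Real.sin θ := Real.sin_pos_of_pos_of_lt_pi hθ0 hθπ
      have hφ : 0 < 2 / π ^ 2 * (θ * (π - θ)) := by
        apply mul_pos (by positivity)
        apply mul_pos hθ0 (by linarith)
      have hlb := sin_lb hθ0.le hθπ.le
      have h1 : Real.log (Real.sin θ ^ 2) ≤ 0 := by
        apply Real.log_nonpos (by positivity)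
        nlinarith [Real.sin_le_one θ, Real.neg_one_le_sin θ]
      rw [Real.norm_eq_abs, Real.norm_eq_abs, abs_of_nonpos h1]
      have key : Real.log (2 / π ^ 2 * (θ * (π - θ))) ≤ Real.log (Real.sin θ) :=
        Real.log_le_log hφ hlb
      have expand : Real.log (2 / π ^ 2 * (θ * (π - θ)))
          = Real.log 2 - 2 * Real.log π + Real.log θ + Real.log (π - θ) := by
        rw [Real.log_mul (by positivity) (ne_of_gt (mul_pos hθ0 (by linarith))),
          Real.log_div (by norm_num) (by positivity),
          Real.log_mul hθ0.ne' (ne_of_gt (by linarith : (0:ℝ) < π - θ)), Real.log_pow]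
        push_cast; ring
      have hsin2 : Real.log (Real.sin θ ^ 2) = 2 * Real.log (Real.sin θ) := by
        rw [Real.log_pow]; push_cast; ring
      have hg2 : Real.log (π ^ 2 / 2) = 2 * Real.log π - Real.log 2 := by
        rw [Real.log_div (by positivity) (by norm_num), Real.log_pow]; push_cast; ring
      have habs : g θ ≤ |g θ| := le_abs_self _
      have hgθ : g θ = 2 * Real.log (π ^ 2 / 2) - 2 * Real.log θ - 2 * Real.log (π - θ) := rfl
      have e3 : g θ = -2 * Real.log (2 / π ^ 2 * (θ * (π - θ))) := by
        rw [hgθ, expand, hg2]; ring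
      calc -Real.log (Real.sin θ ^ 2) = -2 * Real.log (Real.sin θ) := by rw [hsin2]; ring
      _ ≤ -2 * Real.log (2 / π ^ 2 * (θ * (π - θ))) := by linarith
      _ = g θ := e3.symm
      _ ≤ |g θ| := habs

lemma log_sin_sq_shift (k : ℕ) (u : ℝ) :
    Real.log (Real.sin (u + k * π) ^ 2) = Real.log (Real.sin u ^ 2) := by
  rw [Real.sin_add_nat_mul_pi, mul_pow, ← pow_mul, mul_comm k 2, pow_mul]
  norm_num

lemma intervalIntegrable_log_sin_sq_shift (k : ℕ) :
    IntervalIntegrable (fun θ => Real.log (Real.sin θ ^ 2)) volume (k * π) ((k + 1) * π) := by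
  have h := intervalIntegrable_log_sin_sq.comp_sub_right (k * π)
  have e : (fun x => Real.log (Real.sin (x - k * π) ^ 2)) = fun θ => Real.log (Real.sin θ ^ 2) := by
    funext x
    rw [show x - k * π = x + (Int.cast (-(k:ℤ)) : ℝ) * π by push_cast; ring]
    rw [Real.sin_add_int_mul_pi, mul_pow]
    have h1 : ((-1:ℝ) ^ (-(k:ℤ))) ^ 2 = 1 := by
      rw [← zpow_natCast (((-1:ℝ) ^ (-(k:ℤ)))) 2, ← zpow_mul, mul_comm, zpow_mul]
      norm_num
    rw [h1, one_mul]
  rw [e] at h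
  have e2 : (0:ℝ) + k * π = k * π := by ring
  have e3 : π + k * π = (k + 1) * π := by ring
  rwa [e2, e3] at h

lemma intervalIntegrable_mul_log_sin_sq (F : ℝ → ℝ) (hF : Continuous F) (k : ℕ) :
    IntervalIntegrable (fun θ => F θ * Real.log (Real.sin θ ^ 2)) volume (k * π) ((k + 1) * π) :=
  (intervalIntegrable_log_sin_sq_shift k).continuousOn_mul hF.continuousOn

lemma intervalIntegrable_mul_log_sin_sq' (F : ℝ → ℝ) (hF : Continuous F) :
    IntervalIntegrable (fun θ => F θ * Real.log (Real.sin θ ^ 2)) volume 0 π := by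
  have h := intervalIntegrable_mul_log_sin_sq F hF 0
  rwa [show ((0:ℕ):ℝ) * π = 0 by norm_num, show (((0:ℕ):ℝ) + 1) * π = π by norm_num] at h

lemma cont_cos_lin (c : ℝ) : Continuous (fun θ : ℝ => Real.cos (c * θ)) :=
  Real.continuous_cos.comp (continuous_const.mul continuous_id)

lemma cont_sin_lin (c : ℝ) : Continuous (fun θ : ℝ => Real.sin (c * θ)) :=
  Real.continuous_sin.comp (continuous_const.mul continuous_id)

lemma hasDerivAt_sin_lin (c θ : ℝ) (hc : c ≠ 0) :
    HasDerivAt (fun x : ℝ => Real.sin (c * x) / c) (Real.cos (c * θ)) θ := by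
  have hlin : HasDerivAt (fun y : ℝ => c * y) (c * 1) θ :=
    HasDerivAt.const_mul c (hasDerivAt_id θ)
  have h := ((Real.hasDerivAt_sin (c * θ)).comp θ hlin).div_const c
  exact h.congr_deriv (by field_simp)

lemma sinP (m : ℕ) (θ : ℝ) :
    Real.sin (2 * m * θ)
      = Real.sin θ * (2 * ∑ j ∈ Finset.range m, Real.cos ((2 * j + 1) * θ)) := by
  induction m with
  | zero => simp
  | succ m ih =>
      have h1 : Real.sin ((2 * (m:ℝ) + 2) * θ)
          = Real.sin ((2 * (m:ℝ) + 1) * θ) * Real.cos θ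
            + Real.cos ((2 * (m:ℝ) + 1) * θ) * Real.sin θ := by
        rw [show (2 * (m:ℝ) + 2) * θ = (2 * (m:ℝ) + 1) * θ + θ by ring]
        exact Real.sin_add _ _
      have h2 : Real.sin (2 * (m:ℝ) * θ)
          = Real.sin ((2 * (m:ℝ) + 1) * θ) * Real.cos θ
            - Real.cos ((2 * (m:ℝ) + 1) * θ) * Real.sin θ := by
        rw [show 2 * (m:ℝ) * θ = (2 * (m:ℝ) + 1) * θ - θ by ring]
        exact Real.sin_sub _ _
      rw [Finset.sum_range_succ]
      push_cast
      rw [show (2 * ((m:ℝ) + 1)) * θ = (2 * (m:ℝ) + 2) * θ by ring]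
      push_cast at ih
      linear_combination ih + h1 - h2

lemma cosPQ (m : ℕ) (θ : ℝ) :
    (2 * ∑ j ∈ Finset.range m, Real.cos ((2 * j + 1) * θ)) * Real.cos θ
      = ∑ j ∈ Finset.range m, (Real.cos ((2 * j + 2) * θ) + Real.cos (2 * j * θ)) := by
  rw [mul_comm, Finset.mul_sum, Finset.mul_sum]
  apply Finset.sum_congr rfl
  intro j _
  have h1 : Real.cos ((2 * (j:ℝ) + 2) * θ)
      = Real.cos ((2 * (j:ℝ) + 1) * θ) * Real.cos θ
        - Real.sin ((2 * (j:ℝ) + 1) * θ) * Real.sin θ := by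
    rw [show (2 * (j:ℝ) + 2) * θ = (2 * (j:ℝ) + 1) * θ + θ by ring]
    exact Real.cos_add _ _
  have h2 : Real.cos (2 * (j:ℝ) * θ)
      = Real.cos ((2 * (j:ℝ) + 1) * θ) * Real.cos θ
        + Real.sin ((2 * (j:ℝ) + 1) * θ) * Real.sin θ := by
    rw [show 2 * (j:ℝ) * θ = (2 * (j:ℝ) + 1) * θ - θ by ring]
    exact Real.cos_sub _ _
  linear_combination -h1 - h2

noncomputable def Hfun (m : ℕ) : ℝ → ℝ := fun θ =>
  ∑ j ∈ Finset.range m,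
    (Real.sin ((2 * j + 2) * θ) / (2 * j + 2)
      + (if j = 0 then θ else Real.sin (2 * j * θ) / (2 * j)))

lemma Hfun_deriv (m : ℕ) (θ : ℝ) :
    HasDerivAt (Hfun m)
      (∑ j ∈ Finset.range m, (Real.cos ((2 * j + 2) * θ) + Real.cos (2 * j * θ))) θ := by
  apply HasDerivAt.fun_sum
  intro j _
  apply HasDerivAt.add
  · exact hasDerivAt_sin_lin (2 * j + 2) θ (by positivity)
  · rcases Nat.eq_zero_or_pos j with rfl | hj
    · simp only [if_pos rfl]
      have : Real.cos (2 * ((0:ℕ):ℝ) * θ) = 1 := by norm_num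
      rw [this]
      exact hasDerivAt_id θ
    · have hj0 : j ≠ 0 := by omega
      simp only [hj0, if_false]
      exact hasDerivAt_sin_lin (2 * j) θ (by positivity)

lemma Hfun_cont (m : ℕ) : Continuous (Hfun m) := by
  apply continuous_finset_sum
  intro j _
  apply Continuous.add
  · exact (cont_sin_lin _).div_const _
  · split_ifs
    · exact continuous_id
    · exact (cont_sin_lin _).div_const _

lemma Hfun_zero (m : ℕ) : Hfun m 0 = 0 := by
  unfold Hfun
  apply Finset.sum_eq_zero
  intro j _
  split_ifs <;> simp

lemma Hfun_pi (m : ℕ) (hm : 1 ≤ m) : Hfun m π = π := by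
  unfold Hfun
  have h : ∀ j ∈ Finset.range m,
      (Real.sin ((2 * j + 2) * π) / (2 * j + 2)
        + (if j = 0 then π else Real.sin (2 * j * π) / (2 * j)))
      = if j = 0 then π else 0 := by
    intro j _
    rw [show (2 * (j:ℝ) + 2) * π = ((2 * j + 2 : ℕ):ℝ) * π by push_cast; ring,
      Real.sin_nat_mul_pi]
    split_ifs with hj
    · simp
    · rw [show 2 * (j:ℝ) * π = ((2 * j : ℕ):ℝ) * π by push_cast; ring, Real.sin_nat_mul_pi]
      simp
  rw [Finset.sum_congr rfl h, Finset.sum_ite_eq' (Finset.range m) 0 (fun _ => π)]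
  simp [Finset.mem_range, hm]
  omega

lemma tendsto_mul_log_sq : Filter.Tendsto (fun t : ℝ => t * Real.log (t ^ 2)) (𝓝[>] (0:ℝ)) (𝓝 0) := by
  have h := tendsto_log_mul_rpow_nhdsGT_zero one_pos
  have h2 : Filter.Tendsto (fun x : ℝ => 2 * (Real.log x * x ^ (1:ℝ))) (𝓝[>] (0:ℝ)) (𝓝 0) := by
    simpa using h.const_mul 2
  apply h2.congr'
  filter_upwards [self_mem_nhdsWithin] with x hx
  have hx0 : (0:ℝ) < x := hx
  rw [Real.rpow_one, Real.log_pow]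
  push_cast
  ring

lemma Jm1 (m : ℕ) (hm : 1 ≤ m) :
    ∫ θ in (0:ℝ)..π, Real.cos (2 * m * θ) * Real.log (Real.sin θ ^ 2) = -π / m := by
  have hπ := Real.pi_pos
  have hm0 : (m:ℝ) ≠ 0 := Nat.cast_ne_zero.2 (by omega)
  have h2m0 : (2 * (m:ℝ)) ≠ 0 := by positivity
  set P : ℝ → ℝ := fun θ => 2 * ∑ j ∈ Finset.range m, Real.cos ((2 * j + 1) * θ) with hP
  set G : ℝ → ℝ := fun θ =>
    Real.sin (2 * m * θ) / (2 * m) * Real.log (Real.sin θ ^ 2) - (1 / m) * Hfun m θ with hG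
  have hPc : Continuous P := by
    apply continuous_const.mul
    exact continuous_finset_sum _ fun j _ => cont_cos_lin _
  have hGd : ∀ θ ∈ Set.Ioo (0:ℝ) π,
      HasDerivAt G (Real.cos (2 * m * θ) * Real.log (Real.sin θ ^ 2)) θ := by
    intro θ hθ
    have hs : Real.sin θ ≠ 0 :=
      ne_of_gt (Real.sin_pos_of_pos_of_lt_pi hθ.1 hθ.2)
    have d1 : HasDerivAt (fun x : ℝ => Real.sin (2 * m * x) / (2 * m))
        (Real.cos (2 * m * θ)) θ := hasDerivAt_sin_lin (2 * m) θ h2m0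
    have d2 : HasDerivAt (fun x : ℝ => Real.log (Real.sin x ^ 2))
        (2 * Real.sin θ ^ 1 * Real.cos θ / Real.sin θ ^ 2) θ := by
      exact HasDerivAt.log ((Real.hasDerivAt_sin θ).pow 2) (pow_ne_zero 2 hs)
    have d3 := (d1.mul d2).sub ((Hfun_deriv m θ).const_mul (1 / (m:ℝ)))
    refine d3.congr_deriv ?_
    have e1 := sinP m θ
    have e2 := cosPQ m θ
    have key : Real.sin (2 * m * θ) / (2 * m) * (2 * Real.sin θ ^ 1 * Real.cos θ / Real.sin θ ^ 2)
        = (1 / (m:ℝ)) * ∑ j ∈ Finset.range m, (Real.cos ((2 * j + 2) * θ) + Real.cos (2 * j * θ)) := by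
      rw [e1, ← e2]
      field_simp
      rw [mul_comm]; congr 1; exact Finset.sum_congr rfl fun x _ => by ring_nf
    rw [key]; ring
  have hint : IntervalIntegrable (fun θ => Real.cos (2 * m * θ) * Real.log (Real.sin θ ^ 2))
      volume 0 π := intervalIntegrable_mul_log_sin_sq' _ (cont_cos_lin _)
  have hGeq : G = fun θ =>
      P θ * (Real.sin θ * Real.log (Real.sin θ ^ 2)) / (2 * m) - (1 / m) * Hfun m θ := by
    funext θ
    rw [hG]
    simp only
    rw [sinP m θ]
    ring
  have hs0 : Filter.Tendsto Real.sin (𝓝[>] (0:ℝ)) (𝓝[>] 0) := by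
    apply tendsto_nhdsWithin_of_tendsto_nhds_of_eventually_within
    · have h := Real.continuous_sin.tendsto 0
      rw [Real.sin_zero] at h
      exact h.mono_left nhdsWithin_le_nhds
    · filter_upwards [Ioo_mem_nhdsGT_of_mem (Set.left_mem_Ico.2 hπ)] with x hx
      exact Real.sin_pos_of_pos_of_lt_pi hx.1 hx.2
  have hsπ : Filter.Tendsto Real.sin (𝓝[<] π) (𝓝[>] 0) := by
    apply tendsto_nhdsWithin_of_tendsto_nhds_of_eventually_within
    · have h := Real.continuous_sin.tendsto π
      rw [Real.sin_pi] at h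
      exact h.mono_left nhdsWithin_le_nhds
    · filter_upwards [Ioo_mem_nhdsLT_of_mem (Set.right_mem_Ioc.2 hπ)] with x hx
      exact Real.sin_pos_of_pos_of_lt_pi hx.1 hx.2
  have hcomp0 : Filter.Tendsto (fun θ => Real.sin θ * Real.log (Real.sin θ ^ 2))
      (𝓝[>] (0:ℝ)) (𝓝 0) := tendsto_mul_log_sq.comp hs0
  have hcompπ : Filter.Tendsto (fun θ => Real.sin θ * Real.log (Real.sin θ ^ 2))
      (𝓝[<] π) (𝓝 0) := tendsto_mul_log_sq.comp hsπ
  have h0 : Filter.Tendsto G (𝓝[>] (0:ℝ)) (𝓝 0) := by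
    rw [hGeq]
    have hPl : Filter.Tendsto P (𝓝[>] (0:ℝ)) (𝓝 (P 0)) :=
      (hPc.tendsto 0).mono_left nhdsWithin_le_nhds
    have hHl : Filter.Tendsto (Hfun m) (𝓝[>] (0:ℝ)) (𝓝 (Hfun m 0)) :=
      ((Hfun_cont m).tendsto 0).mono_left nhdsWithin_le_nhds
    have := ((hPl.mul hcomp0).div_const (2 * (m:ℝ))).sub (hHl.const_mul (1 / (m:ℝ)))
    simpa [Hfun_zero] using this
  have hb : Filter.Tendsto G (𝓝[<] π) (𝓝 (-π / m)) := by
    rw [hGeq]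
    have hPl : Filter.Tendsto P (𝓝[<] π) (𝓝 (P π)) :=
      (hPc.tendsto π).mono_left nhdsWithin_le_nhds
    have hHl : Filter.Tendsto (Hfun m) (𝓝[<] π) (𝓝 (Hfun m π)) :=
      ((Hfun_cont m).tendsto π).mono_left nhdsWithin_le_nhds
    have := ((hPl.mul hcompπ).div_const (2 * (m:ℝ))).sub (hHl.const_mul (1 / (m:ℝ)))
    rw [Hfun_pi m hm] at this
    have e : P π * 0 / (2 * (m:ℝ)) - 1 / (m:ℝ) * π = -π / m := by ring
    rwa [e] at this
  have := intervalIntegral.integral_eq_sub_of_hasDerivAt_of_tendsto hπ hGd hint h0 hb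
  rw [this]
  ring

lemma exp_I_re (t : ℝ) : (Complex.exp (t * Complex.I)).re = Real.cos t := by
  rw [Complex.exp_mul_I]
  simp [Complex.cos_ofReal_re]

lemma cos_sum_zero (m N : ℕ) (hm : 1 ≤ m) (hmN : m < N) (x : ℝ) :
    ∑ k ∈ Finset.range N, Real.cos (x + k * (2 * π * m / N)) = 0 := by
  have hN0 : (N:ℝ) ≠ 0 := Nat.cast_ne_zero.2 (by omega)
  have hπ := Real.pi_pos
  have hm' : (1:ℝ) ≤ (m:ℝ) := by exact_mod_cast hm
  have hmN' : (m:ℝ) < (N:ℝ) := by exact_mod_cast hmN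
  have hN' : (0:ℝ) < N := by linarith
  set b : ℝ := 2 * π * m / N with hb
  have hbpos : 0 < b := by
    rw [hb]; apply div_pos (by nlinarith) hN'
  have hblt : b < 2 * π := by
    rw [hb, div_lt_iff₀ hN']
    nlinarith
  have hb1 : Complex.exp (b * Complex.I) ≠ 1 := by
    intro hcon
    rw [Complex.exp_eq_one_iff] at hcon
    obtain ⟨j, hj⟩ := hcon
    have him := congrArg Complex.im hj
    simp at him
    -- him : b = j * (2 * π) (in some form)
    have hj0 : (0:ℝ) < (j:ℝ) := by nlinarith
    have hj1 : (j:ℝ) < 1 := by nlinarith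
    have hj0' : (0:ℤ) < j := by exact_mod_cast hj0
    have hj1' : (j:ℤ) < 1 := by exact_mod_cast hj1
    omega
  have hbN : Complex.exp ((N:ℂ) * ((b:ℂ) * Complex.I)) = 1 := by
    rw [Complex.exp_eq_one_iff]
    refine ⟨m, ?_⟩
    rw [show ((N:ℂ) * ((b:ℂ) * Complex.I)) = (((N:ℝ) * b : ℝ) : ℂ) * Complex.I by push_cast; ring]
    rw [show ((N:ℝ) * b) = 2 * π * m by rw [hb]; field_simp]
    push_cast
    ring
  have hgeom : ∑ k ∈ Finset.range N, Complex.exp ((x:ℂ) * Complex.I + (k:ℂ) * ((b:ℂ) * Complex.I)) = 0 := by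
    have he : ∀ k : ℕ, Complex.exp ((x:ℂ) * Complex.I + (k:ℂ) * ((b:ℂ) * Complex.I))
        = Complex.exp ((x:ℂ) * Complex.I) * (Complex.exp ((b:ℂ) * Complex.I)) ^ k := by
      intro k
      rw [Complex.exp_add, Complex.exp_nat_mul]
    rw [Finset.sum_congr rfl (fun k _ => he k), ← Finset.mul_sum, geom_sum_eq hb1,
      ← Complex.exp_nat_mul, hbN]
    simp
  have hsum : ∑ k ∈ Finset.range N, Complex.exp ((((x + k * b) : ℝ) : ℂ) * Complex.I) = 0 := by
    rw [← hgeom]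
    apply Finset.sum_congr rfl
    intro k _
    congr 1
    push_cast
    ring
  have := congrArg Complex.re hsum
  rw [Complex.re_sum] at this
  simp only [exp_I_re] at this
  simpa using this


lemma Jsplit (N : ℕ) (hN : 1 ≤ N) (c : ℝ) :
    ∫ θ in (0:ℝ)..π, Real.cos (c * θ) * Real.log (Real.sin ((N:ℝ) * θ) ^ 2)
      = (N:ℝ)⁻¹ * ∑ k ∈ Finset.range N,
          ∫ v in (0:ℝ)..π, Real.cos (c / N * (v + k * π)) * Real.log (Real.sin v ^ 2) := by
  have hN0 : (N:ℝ) ≠ 0 := Nat.cast_ne_zero.2 (by omega)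
  set g : ℝ → ℝ := fun u => Real.cos (c / N * u) * Real.log (Real.sin u ^ 2) with hg
  have hgi : ∀ k : ℕ, IntervalIntegrable g volume (k * π) ((k + 1) * π) := fun k =>
    intervalIntegrable_mul_log_sin_sq _ (cont_cos_lin _) k
  have step1 : ∫ θ in (0:ℝ)..π, Real.cos (c * θ) * Real.log (Real.sin ((N:ℝ) * θ) ^ 2)
      = ∫ θ in (0:ℝ)..π, g ((N:ℝ) * θ) := by
    apply intervalIntegral.integral_congr
    intro θ _
    simp only [hg]
    rw [show c / N * ((N:ℝ) * θ) = c * θ by field_simp]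
  have step2 : ((N:ℝ)) * ∫ θ in (0:ℝ)..π, g ((N:ℝ) * θ) = ∫ u in ((N:ℝ) * 0)..((N:ℝ) * π), g u :=
    intervalIntegral.mul_integral_comp_mul_left (a := (0:ℝ)) (b := π) (f := g) (c := (N:ℝ))
  have step3 : ∫ u in ((0:ℝ))..((N:ℝ) * π), g u
      = ∑ k ∈ Finset.range N, ∫ u in ((k:ℝ) * π)..(((k:ℝ) + 1) * π), g u := by
    have h := intervalIntegral.sum_integral_adjacent_intervals
      (a := fun k : ℕ => (k:ℝ) * π) (μ := volume) (f := g) (n := N) ?_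
    · rw [show (((0:ℕ)):ℝ) * π = 0 by norm_num] at h
      rw [← h]
      apply Finset.sum_congr rfl
      intro k _
      congr 1
      push_cast
      ring
    · intro k _
      have := hgi k
      rwa [show ((k:ℝ) + 1) * π = ((k + 1 : ℕ):ℝ) * π by push_cast; ring] at this
  have step4 : ∀ k : ℕ, ∫ u in ((k:ℝ) * π)..(((k:ℝ) + 1) * π), g u
      = ∫ v in (0:ℝ)..π, Real.cos (c / N * (v + k * π)) * Real.log (Real.sin v ^ 2) := by
    intro k
    have h := intervalIntegral.integral_comp_add_right (a := (0:ℝ)) (b := π) g ((k:ℝ) * π)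
    rw [zero_add, show π + (k:ℝ) * π = ((k:ℝ) + 1) * π by ring] at h
    rw [← h]
    apply intervalIntegral.integral_congr
    intro v _
    simp only [hg]
    rw [log_sin_sq_shift]
  rw [show ((N:ℝ) * 0) = 0 by ring] at step2
  have hsum : ∑ k ∈ Finset.range N,
      ∫ v in (0:ℝ)..π, Real.cos (c / N * (v + k * π)) * Real.log (Real.sin v ^ 2)
      = ∫ u in (0:ℝ)..((N:ℝ) * π), g u := by
    rw [step3]
    exact Finset.sum_congr rfl fun k _ => (step4 k).symm
  rw [step1, hsum, ← step2, ← mul_assoc, inv_mul_cancel₀ hN0, one_mul]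

lemma JmN (m N : ℕ) (hm : 1 ≤ m) (hmN : m < N) :
    ∫ θ in (0:ℝ)..π, Real.cos (2 * m * θ) * Real.log (Real.sin ((N:ℝ) * θ) ^ 2) = 0 := by
  have hN0 : (N:ℝ) ≠ 0 := Nat.cast_ne_zero.2 (by omega)
  rw [Jsplit N (by omega) (2 * m)]
  have hz : ∀ k ∈ Finset.range N,
      (∫ v in (0:ℝ)..π, Real.cos (2 * (m:ℝ) / N * (v + k * π)) * Real.log (Real.sin v ^ 2))
        = ∫ v in (0:ℝ)..π,
            (Real.cos (2 * (m:ℝ) / N * v + k * (2 * π * m / N))) * Real.log (Real.sin v ^ 2) := by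
    intro k _
    apply intervalIntegral.integral_congr
    intro v _
    have e : 2 * (m:ℝ) / N * (v + k * π) = 2 * (m:ℝ) / N * v + k * (2 * π * m / N) := by
      field_simp
    simp only [e]
  rw [Finset.sum_congr rfl hz]
  have hswap : ∑ k ∈ Finset.range N,
      ∫ v in (0:ℝ)..π,
        (Real.cos (2 * (m:ℝ) / N * v + k * (2 * π * m / N))) * Real.log (Real.sin v ^ 2)
      = ∫ v in (0:ℝ)..π, ∑ k ∈ Finset.range N,
        (Real.cos (2 * (m:ℝ) / N * v + k * (2 * π * m / N))) * Real.log (Real.sin v ^ 2) := by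
    rw [intervalIntegral.integral_finset_sum]
    intro k _
    exact intervalIntegrable_mul_log_sin_sq' _ (Real.continuous_cos.comp
      ((continuous_const.mul continuous_id).add continuous_const))
  rw [hswap]
  have : ∀ v ∈ Set.uIcc (0:ℝ) π, (∑ k ∈ Finset.range N,
      (Real.cos (2 * (m:ℝ) / N * v + k * (2 * π * m / N))) * Real.log (Real.sin v ^ 2)) = 0 := by
    intro v _
    rw [← Finset.sum_mul, cos_sum_zero m N hm hmN, zero_mul]
  rw [intervalIntegral.integral_congr this]
  simp

lemma JNN (N : ℕ) (hN : 1 ≤ N) :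
    ∫ θ in (0:ℝ)..π, Real.cos (2 * N * θ) * Real.log (Real.sin ((N:ℝ) * θ) ^ 2) = -π := by
  have hN0 : (N:ℝ) ≠ 0 := Nat.cast_ne_zero.2 (by omega)
  rw [Jsplit N hN (2 * N)]
  have hz : ∀ k ∈ Finset.range N,
      (∫ v in (0:ℝ)..π, Real.cos (2 * (N:ℝ) / N * (v + k * π)) * Real.log (Real.sin v ^ 2))
        = -π := by
    intro k _
    have he : ∀ v : ℝ, Real.cos (2 * (N:ℝ) / N * (v + k * π)) = Real.cos (2 * v + k * (2 * π)) := by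
      intro v
      congr 1
      field_simp
    have hper : ∀ v : ℝ, Real.cos (2 * v + k * (2 * π)) = Real.cos (2 * v) :=
      fun v => Real.cos_add_nat_mul_two_pi (2 * v) k
    have hcongr : (∫ v in (0:ℝ)..π, Real.cos (2 * (N:ℝ) / N * (v + k * π)) * Real.log (Real.sin v ^ 2))
        = ∫ v in (0:ℝ)..π, Real.cos (2 * (1:ℕ) * v) * Real.log (Real.sin v ^ 2) := by
      apply intervalIntegral.integral_congr
      intro v _
      simp only [he, hper]
      norm_num
    rw [hcongr, Jm1 1 le_rfl]
    norm_num
  rw [Finset.sum_congr rfl hz]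
  simp [Finset.sum_const]
  field_simp

lemma intervalIntegrable_cos_log_sin_sq_N (c : ℝ) (N : ℕ) (hN : 1 ≤ N) :
    IntervalIntegrable (fun θ => Real.cos (c * θ) * Real.log (Real.sin ((N:ℝ) * θ) ^ 2))
      volume 0 π := by
  have hN0 : (N:ℝ) ≠ 0 := Nat.cast_ne_zero.2 (by omega)
  set g : ℝ → ℝ := fun u => Real.cos (c / N * u) * Real.log (Real.sin u ^ 2) with hg
  have hgfull : IntervalIntegrable g volume ((fun k : ℕ => (k:ℝ) * π) 0) ((fun k : ℕ => (k:ℝ) * π) N) := by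
    apply IntervalIntegrable.trans_iterate (a := fun k : ℕ => (k:ℝ) * π)
    intro k _
    have h := intervalIntegrable_mul_log_sin_sq _ (cont_cos_lin (c / N)) k
    rwa [show ((k:ℝ) + 1) * π = ((k + 1 : ℕ):ℝ) * π by push_cast; ring] at h
  have h2 := hgfull.comp_mul_left (c := (N:ℝ))
  simp only [Nat.cast_zero, zero_mul] at h2
  rw [zero_div, show ((N:ℝ) * π / N) = π by field_simp] at h2
  have he : (fun x => g ((N:ℝ) * x))
      = fun θ => Real.cos (c * θ) * Real.log (Real.sin ((N:ℝ) * θ) ^ 2) := by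
    funext θ
    simp only [hg]
    rw [show c / N * ((N:ℝ) * θ) = c * θ by field_simp]
  rwa [he] at h2

theorem chebyshevU_log_integral (n m : ℕ) (hm1 : 1 ≤ m) (hm2 : m ≤ n + 1) :
    ∫ θ in (0 : ℝ)..Real.pi,
        Real.cos (2 * m * θ) * Real.log ((gegen 1 n (Real.cos θ)) ^ 2) =
      Real.pi * (1 / (m : ℝ) - if m = n + 1 then 1 else 0) := by
  have hπ := Real.pi_pos
  have hm0 : (m:ℝ) ≠ 0 := Nat.cast_ne_zero.2 (by omega)
  have hn1 : ((n:ℝ) + 1) ≠ 0 := by positivity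
  set E : Set ℝ := {θ : ℝ | Real.sin (((n:ℝ) + 1) * θ) = 0} with hE
  have hEc : E.Countable := by
    have hsub : E ⊆ Set.range (fun k : ℤ => (k:ℝ) * π / ((n:ℝ) + 1)) := by
      intro θ hθ
      rw [hE, Set.mem_setOf_eq, Real.sin_eq_zero_iff] at hθ
      obtain ⟨k, hk⟩ := hθ
      refine ⟨k, ?_⟩
      field_simp
      linarith
    exact (Set.countable_range _).mono hsub
  have hae : ∀ᵐ θ ∂(volume : Measure ℝ), θ ∉ E := hEc.ae_notMem volume
  have hsplit : ∀ᵐ θ ∂(volume : Measure ℝ), θ ∈ Set.uIoc (0:ℝ) π →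
      Real.cos (2 * m * θ) * Real.log ((gegen 1 n (Real.cos θ)) ^ 2)
      = Real.cos (2 * m * θ) * Real.log (Real.sin (((n:ℝ) + 1) * θ) ^ 2)
        - Real.cos (2 * m * θ) * Real.log (Real.sin θ ^ 2) := by
    filter_upwards [hae] with θ hθE _
    have hsN : Real.sin (((n:ℝ) + 1) * θ) ≠ 0 := hθE
    have hs : Real.sin θ ≠ 0 := by
      intro h
      apply hθE
      rw [hE, Set.mem_setOf_eq]
      obtain ⟨k, hk⟩ := Real.sin_eq_zero_iff.1 h
      rw [← hk, show ((n:ℝ) + 1) * ((k:ℝ) * π) = (((n + 1 : ℕ) * k : ℤ):ℝ) * π by push_cast; ring]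
      exact Real.sin_int_mul_pi _
    have hU := gegen_U n θ
    have hgg : (gegen 1 n (Real.cos θ)) ^ 2 = Real.sin (((n:ℝ) + 1) * θ) ^ 2 / Real.sin θ ^ 2 := by
      rw [eq_div_iff (pow_ne_zero 2 hs), ← mul_pow, hU]
    rw [hgg, Real.log_div (pow_ne_zero 2 hsN) (pow_ne_zero 2 hs), mul_sub]
  rw [intervalIntegral.integral_congr_ae hsplit]
  have hA : IntervalIntegrable
      (fun θ => Real.cos (2 * (m:ℝ) * θ) * Real.log (Real.sin (((n:ℝ) + 1) * θ) ^ 2)) volume 0 π := by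
    have h := intervalIntegrable_cos_log_sin_sq_N (2 * m) (n + 1) (by omega)
    rwa [show (((n + 1 : ℕ)):ℝ) = (n:ℝ) + 1 by push_cast; ring] at h
  have hB : IntervalIntegrable
      (fun θ => Real.cos (2 * (m:ℝ) * θ) * Real.log (Real.sin θ ^ 2)) volume 0 π :=
    intervalIntegrable_mul_log_sin_sq' _ (cont_cos_lin _)
  rw [intervalIntegral.integral_sub hA hB]
  rw [Jm1 m hm1]
  have hcast : ((n:ℝ) + 1) = (((n + 1 : ℕ)):ℝ) := by push_cast; ring
  rcases eq_or_lt_of_le hm2 with rfl | hlt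
  · have h1 : ∫ θ in (0:ℝ)..π,
        Real.cos (2 * ((n + 1 : ℕ):ℝ) * θ) * Real.log (Real.sin (((n:ℝ) + 1) * θ) ^ 2) = -π := by
      rw [hcast]
      exact JNN (n + 1) (by omega)
    rw [h1]
    rw [if_pos rfl]
    field_simp
    ring
  · have h1 : ∫ θ in (0:ℝ)..π,
        Real.cos (2 * (m:ℝ) * θ) * Real.log (Real.sin (((n:ℝ) + 1) * θ) ^ 2) = 0 := by
      rw [hcast]
      exact JmN m (n + 1) hm1 (by omega)
    rw [h1, if_neg (by omega)]
    field_simp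
    ring
end
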